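/- Let G be a group of order 2 (e.g. G = Multiplicative (ZMod 2)) and let ℤ_sign be the G-representation on the abelian group ℤ where the nontrivial element of G acts by negation. Then the third group cohomology H³(G, ℤ_sign) is isomorphic to ℤ/2ℤ. -/

import Mathlib

open groupCohomology CategoryTheory

namespace Stmt13Aux

variable {G : Type} [Group G]

theorem d3eval (A : Rep ℤ G) (f : (Fin 3 → G) → A) (a b c d : G) :
    (inhomogeneousCochains.d A 3).hom f ![a,b,c,d] =
      A.ρ a (f ![b,c,d]) - f ![a*b,c,d] + f ![a,b*c,d] - f ![a,b,c*d] + f ![a,b,c] := by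
  have h0 : (fun i : Fin 3 => (![a,b,c,d]) i.succ) = ![b,c,d] := by
    funext i; fin_cases i <;> rfl
  have h1 : Fin.contractNth 0 (· * ·) ![a,b,c,d] = ![a*b,c,d] := by
    funext i; fin_cases i <;> rfl
  have h2 : Fin.contractNth 1 (· * ·) ![a,b,c,d] = ![a,b*c,d] := by
    funext i; fin_cases i <;> rfl
  have h3 : Fin.contractNth 2 (· * ·) ![a,b,c,d] = ![a,b,c*d] := by
    funext i; fin_cases i <;> rfl
  have h4 : Fin.contractNth 3 (· * ·) ![a,b,c,d] = ![a,b,c] := by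
    funext i; fin_cases i <;> rfl
  have hv : ((3 : Fin 4) : ℕ) = 3 := rfl
  rw [inhomogeneousCochains.d_hom_apply, Fin.sum_univ_four, h0, h1, h2, h3, h4, hv]
  norm_num
  convert (show A.ρ a (f ![b,c,d]) + (-(f ![a*b,c,d]) + f ![a,b*c,d] + -(f ![a,b,c*d]) + f ![a,b,c]) = A.ρ a (f ![b,c,d]) - f ![a*b,c,d] + f ![a,b*c,d] - f ![a,b,c*d] + f ![a,b,c] by abel) using 6
  all_goals exact A.hV2.one_smul _

theorem d2eval (A : Rep ℤ G) (f : (Fin 2 → G) → A) (a b c : G) :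
    (inhomogeneousCochains.d A 2).hom f ![a,b,c] =
      A.ρ a (f ![b,c]) - f ![a*b,c] + f ![a,b*c] - f ![a,b] := by
  have h0 : (fun i : Fin 2 => (![a,b,c]) i.succ) = ![b,c] := by
    funext i; fin_cases i <;> rfl
  have h1 : Fin.contractNth 0 (· * ·) ![a,b,c] = ![a*b,c] := by
    funext i; fin_cases i <;> rfl
  have h2 : Fin.contractNth 1 (· * ·) ![a,b,c] = ![a,b*c] := by
    funext i; fin_cases i <;> rfl
  have h3 : Fin.contractNth 2 (· * ·) ![a,b,c] = ![a,b] := by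
    funext i; fin_cases i <;> rfl
  have hv : ((2 : Fin 3) : ℕ) = 2 := rfl
  rw [inhomogeneousCochains.d_hom_apply, Fin.sum_univ_three, h0, h1, h2, h3, hv]
  norm_num
  convert (show A.ρ a (f ![b,c]) + (-(f ![a*b,c]) + f ![a,b*c] + -(f ![a,b])) = A.ρ a (f ![b,c]) - f ![a*b,c] + f ![a,b*c] - f ![a,b] by abel) using 5
  all_goals exact A.hV2.one_smul _

/-- An isomorphism in `ModuleCat` gives an additive equivalence of the underlying types. -/
noncomputable def modIsoAddEquiv {R : Type} [Ring R] {X Y : ModuleCat R} (i : X ≅ Y) :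
    X ≃+ Y where
  toFun := i.hom.hom
  invFun := i.inv.hom
  left_inv x := by
    have h : (i.hom ≫ i.inv).hom x = (𝟙 X : X ⟶ X).hom x := by rw [i.hom_inv_id]
    exact h
  right_inv x := by
    have h : (i.inv ≫ i.hom).hom x = (𝟙 Y : Y ⟶ Y).hom x := by rw [i.inv_hom_id]
    exact h
  map_add' := map_add i.hom.hom

end Stmt13Aux

open Stmt13Aux

set_option maxHeartbeats 2000000 in
/-- For a group `G` of order 2, the third group cohomology of `G` with coefficients in the
sign representation `ℤ₋` (where the nontrivial element acts by negation) is `ℤ/2ℤ`. -/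
theorem stmt_13 (G : Type) [Group G] (hG : Nat.card G = 2)
    (ρ : Representation ℤ G ℤ)
    (hρ : ∀ g : G, g ≠ 1 → ∀ m : ℤ, ρ g m = -m) :
    Nonempty ((groupCohomology (Rep.of ρ) 3) ≃+ ZMod 2) := by
  classical
  set A : Rep ℤ G := Rep.of ρ with hA
  -- the group has exactly two elements 1 and σ
  obtain ⟨σ, hσ1, hσuniq⟩ := (Nat.card_eq_two_iff' (1 : G)).1 hG
  have hdich : ∀ g : G, g = 1 ∨ g = σ := by
    intro g
    by_cases h : g = 1
    · exact Or.inl h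
    · exact Or.inr (hσuniq g h)
  have hσσ : σ * σ = 1 := by
    rcases hdich (σ * σ) with h | h
    · exact h
    · exact absurd (mul_left_cancel (a := σ) (by rw [h, mul_one])) hσ1
  have hρσ : ∀ m : ℤ, ρ σ m = -m := hρ σ hσ1
  have hρ1 : ∀ m : ℤ, ρ 1 m = m := by intro m; rw [map_one]; rfl
  -- the complex and the short complex around degree 3
  set K := inhomogeneousCochains A with hK
  set S := K.sc' 2 3 4 with hS
  have hgm : S.g = inhomogeneousCochains.d A 3 := inhomogeneousCochains.d_def A 3
  have hfm : S.f = inhomogeneousCochains.d A 2 := inhomogeneousCochains.d_def A 2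
  -- bridges retyping carrier elements as honest ℤ-valued functions
  let z2 : ↑(K.X 2) → ((Fin 2 → G) → ℤ) := fun v => v
  let z3 : ↑(K.X 3) → ((Fin 3 → G) → ℤ) := fun v => v
  let z4 : ↑(K.X 4) → ((Fin 4 → G) → ℤ) := fun v => v
  -- evaluation forms of the differentials, valued in ℤ
  have d3S : ∀ (f : (Fin 3 → G) → ℤ) (a b c d : G),
      z4 (S.g.hom f) ![a,b,c,d] =
        ρ a (f ![b,c,d]) - f ![a*b,c,d] + f ![a,b*c,d] - f ![a,b,c*d] + f ![a,b,c] := by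
    intro f a b c d
    rw [hgm]
    exact d3eval A f a b c d
  have d2S : ∀ (f : (Fin 2 → G) → ℤ) (a b c : G),
      z3 (S.f.hom f) ![a,b,c] =
        ρ a (f ![b,c]) - f ![a*b,c] + f ![a,b*c] - f ![a,b] := by
    intro f a b c
    rw [hfm]
    exact d2eval A f a b c
  -- the evaluation homomorphism ψ to ZMod 2
  let ψ : ((Fin 3 → G) → ℤ) →ₗ[ℤ] ZMod 2 :=
    { toFun := fun f => ((f ![σ,1,1] + f ![1,1,σ] + f ![σ,σ,σ] : ℤ) : ZMod 2)
      map_add' := by intro x y; push_cast [Pi.add_apply]; ring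
      map_smul' := by
        intro r x
        simp only [Pi.smul_apply, smul_eq_mul, RingHom.id_apply, zsmul_eq_mul]
        push_cast
        ring }
  let ψker : LinearMap.ker S.g.hom →ₗ[ℤ] ZMod 2 := ψ.comp (LinearMap.ker S.g.hom).subtype
  -- coboundaries are sent to 0
  have hsub : LinearMap.range S.moduleCatToCycles ≤ LinearMap.ker ψker := by
    rintro x ⟨y, rfl⟩
    set Y : (Fin 2 → G) → ℤ := z2 y with hY
    have hrfl : ψker (S.moduleCatToCycles y) =
        ((z3 (S.f.hom Y) ![σ,1,1] + z3 (S.f.hom Y) ![1,1,σ] + z3 (S.f.hom Y) ![σ,σ,σ] : ℤ) : ZMod 2) := rfl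
    show ψker _ = 0
    rw [hrfl, d2S Y σ 1 1, d2S Y 1 1 σ, d2S Y σ σ σ]
    simp only [one_mul, mul_one, hσσ, hρσ, hρ1]
    rw [ZMod.intCast_zmod_eq_zero_iff_dvd]
    exact ⟨-(Y ![1,1]) - Y ![σ,σ], by push_cast; ring⟩
  -- cocycles with even ψ-value are coboundaries
  have hker : LinearMap.ker ψker ≤ LinearMap.range S.moduleCatToCycles := by
    intro x hx
    set F : (Fin 3 → G) → ℤ := z3 x.1 with hF
    have hxz : S.g.hom F = 0 := LinearMap.mem_ker.1 x.2
    have hx3 : ∀ g : Fin 4 → G, z4 (S.g.hom F) g = 0 := by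
      intro g
      rw [hxz]
      rfl
    have R0 : F ![1,1,1] = 0 := by
      have h := hx3 ![1,1,1,1]
      rw [d3S F 1 1 1 1] at h
      simp only [one_mul, mul_one, hρ1] at h
      linarith
    have R2 : F ![1,σ,1] = 0 := by
      have h := hx3 ![1,1,σ,1]
      rw [d3S F 1 1 σ 1] at h
      simp only [one_mul, mul_one, hρ1] at h
      linarith
    have R3 : F ![1,σ,σ] = -F ![1,1,σ] := by
      have h := hx3 ![1,1,σ,σ]
      rw [d3S F 1 1 σ σ] at h
      simp only [one_mul, mul_one, hσσ, hρ1] at h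
      linarith [R0]
    have R5 : F ![σ,1,σ] = F ![σ,1,1] - F ![1,1,σ] := by
      have h := hx3 ![σ,1,1,σ]
      rw [d3S F σ 1 1 σ] at h
      simp only [one_mul, mul_one, hρσ] at h
      linarith
    have R6 : F ![σ,σ,1] = F ![σ,1,1] := by
      have h := hx3 ![σ,σ,1,1]
      rw [d3S F σ σ 1 1] at h
      simp only [one_mul, mul_one, hσσ, hρσ] at h
      linarith [R0]
    -- ψ x = 0 means the sum is even
    have hx0 : ((F ![σ,1,1] + F ![1,1,σ] + F ![σ,σ,σ] : ℤ) : ZMod 2) = 0 :=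
      LinearMap.mem_ker.1 hx
    rw [ZMod.intCast_zmod_eq_zero_iff_dvd] at hx0
    obtain ⟨t, ht⟩ := hx0
    push_cast at ht
    -- the explicit primitive
    let hh : (Fin 2 → G) → ℤ := fun p =>
      if p 0 = 1 then (if p 1 = 1 then -F ![σ,1,1] else F ![1,1,σ] - F ![σ,1,1])
      else (if p 1 = 1 then 0 else F ![σ,1,1] - t)
    have hv11 : hh ![1,1] = -F ![σ,1,1] := by simp [hh]
    have hv1σ : hh ![1,σ] = F ![1,1,σ] - F ![σ,1,1] := by simp [hh, hσ1]
    have hvσ1 : hh ![σ,1] = 0 := by simp [hh, hσ1]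
    have hvσσ : hh ![σ,σ] = F ![σ,1,1] - t := by simp [hh, hσ1]
    have key : ∀ p q r : G, z3 (S.f.hom hh) ![p,q,r] = F ![p,q,r] := by
      intro p q r
      rcases hdich p with rfl | rfl <;> rcases hdich q with rfl | rfl <;>
        rcases hdich r with rfl | rfl <;>
        · rw [d2S hh]
          simp only [one_mul, mul_one, hσσ, hρσ, hρ1, hv11, hv1σ, hvσ1, hvσσ]
          linarith
    refine ⟨hh, ?_⟩
    apply Subtype.ext
    show S.f.hom hh = x.1
    funext g
    obtain ⟨p, q, r, rfl⟩ : ∃ p q r, g = ![p, q, r] :=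
      ⟨g 0, g 1, g 2, by funext i; fin_cases i <;> rfl⟩
    exact key p q r
  -- the generating cocycle
  let c0 : (Fin 3 → G) → ℤ := fun p =>
    (if p 0 = 1 then 0 else 1) * (if p 1 = 1 then 0 else 1) * (if p 2 = 1 then 0 else 1)
  have hc0z : ∀ g : Fin 4 → G, z4 (S.g.hom c0) g = 0 := by
    intro g
    obtain ⟨p, q, r, s, rfl⟩ : ∃ p q r s, g = ![p, q, r, s] :=
      ⟨g 0, g 1, g 2, g 3, by funext i; fin_cases i <;> rfl⟩
    rcases hdich p with rfl | rfl <;> rcases hdich q with rfl | rfl <;>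
      rcases hdich r with rfl | rfl <;> rcases hdich s with rfl | rfl <;>
      · rw [d3S c0]
        simp only [one_mul, mul_one, hσσ]
        simp [c0, hσ1, hρσ, hρ1]
  have hc0mem : c0 ∈ LinearMap.ker S.g.hom := by
    show S.g.hom c0 = 0
    funext g
    exact hc0z g
  have hψc0 : ψker ⟨c0, hc0mem⟩ = 1 := by
    show ((c0 ![σ,1,1] + c0 ![1,1,σ] + c0 ![σ,σ,σ] : ℤ) : ZMod 2) = 1
    have hval : (c0 ![σ,1,1] + c0 ![1,1,σ] + c0 ![σ,σ,σ] : ℤ) = 1 := by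
      simp [c0, hσ1]
    rw [hval]
    norm_num
  -- assemble the quotient equivalence
  let Φ := Submodule.liftQ (LinearMap.range S.moduleCatToCycles) ψker hsub
  have hinj : Function.Injective Φ := by
    rw [← LinearMap.ker_eq_bot]
    exact Submodule.ker_liftQ_eq_bot _ _ _ hker
  have hsurj : Function.Surjective Φ := by
    have hz : ∀ w : ZMod 2, w = 0 ∨ w = 1 := by decide
    intro z
    rcases hz z with rfl | rfl
    · exact ⟨0, map_zero _⟩
    · exact ⟨Submodule.Quotient.mk ⟨c0, hc0mem⟩, hψc0⟩
  let eqv := LinearEquiv.ofBijective Φ ⟨hinj, hsurj⟩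
  have h1 : (ComplexShape.up ℕ).prev 3 = 2 := CochainComplex.prev_nat_succ 2
  have h2 : (ComplexShape.up ℕ).next 3 = 4 := (ComplexShape.up ℕ).next_eq' rfl
  exact ⟨(modIsoAddEquiv ((K.homologyIsoSc' 2 3 4 h1 h2) ≪≫
    S.moduleCatHomologyIso)).trans eqv.toAddEquiv⟩
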